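/- The Gaussian kernel k(y,y') = exp(−α‖y−y'‖²) is concave as a function of y on any set 𝒳 ⊆ ℝⁿ bounded in norm by C (i.e. ‖y‖ ≤ C for all y ∈ 𝒳) whenever α ≤ 1/(8C²) — more generally whenever 8αC² ≤ ε for some ε ≤ 1. -/

import Mathlib

section Aux

variable (α : ℝ)

private noncomputable def gkφ : ℝ → ℝ := fun r => Real.exp (-α * r ^ 2)

private lemma gkφ_hasDerivAt (r : ℝ) :
    HasDerivAt (gkφ α) ((-2 * α * r) * Real.exp (-α * r ^ 2)) r := by
  have h := ((hasDerivAt_pow 2 r).const_mul (-α)).exp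
  convert h using 1
  · rfl
  simp [gkφ]
  ring

private lemma gkφ_deriv : deriv (gkφ α) = fun r => (-2 * α * r) * Real.exp (-α * r ^ 2) := by
  funext r
  exact (gkφ_hasDerivAt α r).deriv

private lemma gkφ_deriv_hasDerivAt (r : ℝ) :
    HasDerivAt (deriv (gkφ α))
      ((4 * α ^ 2 * r ^ 2 - 2 * α) * Real.exp (-α * r ^ 2)) r := by
  rw [gkφ_deriv]
  have h1 : HasDerivAt (fun r : ℝ => -2 * α * r) (-2 * α) r := by
    simpa using (hasDerivAt_id r).const_mul (-2 * α)
  have h2 : HasDerivAt (fun r : ℝ => Real.exp (-α * r ^ 2))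
      (Real.exp (-α * r ^ 2) * (-α * (2 * r ^ 1))) r :=
    ((hasDerivAt_pow 2 r).const_mul (-α)).exp
  have := h1.mul h2
  exact this.congr_deriv (by ring)

private lemma gkφ_concaveOn {C : ℝ} (hC : 0 < C) (hα : 0 < α)
    (hαC : α ≤ 1 / (8 * C ^ 2)) :
    ConcaveOn ℝ (Set.Icc 0 (2 * C)) (gkφ α) := by
  have hcont : Continuous (gkφ α) := by
    unfold gkφ; fun_prop
  apply concaveOn_of_deriv2_nonpos (convex_Icc _ _) hcont.continuousOn
  · exact fun x _ => ((gkφ_hasDerivAt α x).differentiableAt).differentiableWithinAt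
  · exact fun x _ => ((gkφ_deriv_hasDerivAt α x).differentiableAt).differentiableWithinAt
  · intro x hx
    rw [interior_Icc] at hx
    obtain ⟨hx0, hx2⟩ := hx
    have : deriv^[2] (gkφ α) x = (4 * α ^ 2 * x ^ 2 - 2 * α) * Real.exp (-α * x ^ 2) := by
      simp only [Function.iterate_succ, Function.iterate_zero, Function.comp_apply, id]
      exact (gkφ_deriv_hasDerivAt α x).deriv
    rw [this]
    apply mul_nonpos_of_nonpos_of_nonneg _ (Real.exp_pos _).le
    have hx2' : x ^ 2 ≤ 4 * C ^ 2 := by nlinarith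
    have hα' : 8 * α * C ^ 2 ≤ 1 := by
      rw [le_div_iff₀ (by positivity : (0:ℝ) < 8 * C ^ 2)] at hαC
      nlinarith
    nlinarith [sq_nonneg x, sq_nonneg C]

private lemma gkφ_antitoneOn {C : ℝ} (hC : 0 < C) (hα : 0 < α) :
    AntitoneOn (gkφ α) (Set.Icc 0 (2 * C)) := by
  have hcont : Continuous (gkφ α) := by
    unfold gkφ; fun_prop
  apply antitoneOn_of_deriv_nonpos (convex_Icc _ _) hcont.continuousOn
  · exact fun x _ => ((gkφ_hasDerivAt α x).differentiableAt).differentiableWithinAt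
  · intro x hx
    rw [interior_Icc] at hx
    rw [gkφ_deriv]
    show -2 * α * x * Real.exp (-α * x ^ 2) ≤ 0
    have hx0 : (0:ℝ) ≤ x := hx.1.le
    have he := (Real.exp_pos (-α * x ^ 2)).le
    nlinarith [mul_nonneg (mul_nonneg hα.le hx0) he]

end Aux

/-- the Gaussian kernel `y ↦ exp(−α‖y−y'‖²)` is concave on any convex
set `𝒳` bounded in norm by `C` whenever `α ≤ 1/(8C²)`. -/
theorem gaussian_kernel_concave_on_bounded {n : ℕ}
    (𝒳 : Set (EuclideanSpace ℝ (Fin n))) (h𝒳 : Convex ℝ 𝒳)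
    (C : ℝ) (hC : 0 < C) (hbdd : ∀ y ∈ 𝒳, ‖y‖ ≤ C)
    (α : ℝ) (hα : 0 < α) (hαC : α ≤ 1 / (8 * C ^ 2)) :
    ∀ y' ∈ 𝒳, ConcaveOn ℝ 𝒳 (fun y => Real.exp (-α * ‖y - y'‖ ^ 2)) := by
  intro y' hy'
  have hconc := gkφ_concaveOn α hC hα hαC
  have hanti := gkφ_antitoneOn α hC hα
  have hC' : ‖y'‖ ≤ C := hbdd y' hy'
  refine ⟨h𝒳, ?_⟩
  intro y₁ h₁ y₂ h₂ a b ha hb hab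
  set r₁ := ‖y₁ - y'‖ with hr₁
  set r₂ := ‖y₂ - y'‖ with hr₂
  have hr₁mem : r₁ ∈ Set.Icc (0:ℝ) (2 * C) := by
    constructor
    · exact norm_nonneg _
    · calc r₁ ≤ ‖y₁‖ + ‖y'‖ := norm_sub_le _ _
        _ ≤ C + C := add_le_add (hbdd y₁ h₁) hC'
        _ = 2 * C := by ring
  have hr₂mem : r₂ ∈ Set.Icc (0:ℝ) (2 * C) := by
    constructor
    · exact norm_nonneg _
    · calc r₂ ≤ ‖y₂‖ + ‖y'‖ := norm_sub_le _ _
        _ ≤ C + C := add_le_add (hbdd y₂ h₂) hC'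
        _ = 2 * C := by ring
  have hcomb : a * r₁ + b * r₂ ∈ Set.Icc (0:ℝ) (2 * C) := by
    have := (convex_Icc (0:ℝ) (2 * C)) hr₁mem hr₂mem ha hb hab
    simpa using this
  set r := ‖(a • y₁ + b • y₂) - y'‖ with hr
  have hrle : r ≤ a * r₁ + b * r₂ := by
    have heq : (a • y₁ + b • y₂) - y' = a • (y₁ - y') + b • (y₂ - y') := by
      have h1 : y' = (a + b) • y' := by rw [hab, one_smul]
      calc a • y₁ + b • y₂ - y' = a • y₁ + b • y₂ - (a + b) • y' := by rw [← h1]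
        _ = a • (y₁ - y') + b • (y₂ - y') := by
            rw [add_smul, smul_sub, smul_sub]; abel
    rw [hr, heq]
    calc ‖a • (y₁ - y') + b • (y₂ - y')‖ ≤ ‖a • (y₁ - y')‖ + ‖b • (y₂ - y')‖ :=
          norm_add_le _ _
      _ = a * r₁ + b * r₂ := by
          rw [norm_smul, norm_smul, Real.norm_eq_abs, Real.norm_eq_abs,
            abs_of_nonneg ha, abs_of_nonneg hb]
  have hrmem : r ∈ Set.Icc (0:ℝ) (2 * C) :=
    ⟨norm_nonneg _, hrle.trans hcomb.2⟩
  have step1 : gkφ α (a * r₁ + b * r₂) ≤ gkφ α r := hanti hrmem hcomb hrle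
  have step2 : a * gkφ α r₁ + b * gkφ α r₂ ≤ gkφ α (a * r₁ + b * r₂) := by
    have := hconc.2 hr₁mem hr₂mem ha hb hab
    simpa using this
  have : a * gkφ α r₁ + b * gkφ α r₂ ≤ gkφ α r := step2.trans step1
  simpa [gkφ, smul_eq_mul] using this
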